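/- For u ≥ 0, |B_{2u+1}| + 1 = 2^{2u+1} - 2u - 1, where B_{2u+1} is the set of lists (b₁,...,bₙ) of nonzero elements of ℤ/(2u+1) such that b₁+...+bₙ = 0 in ℤ/(2u+1) and bᵢ ≡ -νᵢ (mod 2u+1) for some list (ν₁,...,νₙ) of integers with Σᵢ|νᵢ| = 2u+1. -/

import Mathlib

-- parity of abs sum
lemma list_abs_sum_parity (l : List ℤ) :
    (l.map (fun x => |x|)).sum % 2 = l.sum % 2 := by
  induction l with
  | nil => rfl
  | cons a l ih =>
    simp only [List.map_cons, List.sum_cons]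
    rcases abs_choice a with h | h <;> rw [h] <;> omega

lemma list_abs_sum_le (l : List ℤ) : |l.sum| ≤ (l.map (fun x => |x|)).sum := by
  induction l with
  | nil => simp
  | cons a l ih =>
    simp only [List.map_cons, List.sum_cons]
    exact le_trans (abs_add_le _ _) (by linarith)

lemma all_nonneg_of_sum_eq_abs (l : List ℤ)
    (h : l.sum = (l.map (fun x => |x|)).sum) : ∀ x ∈ l, 0 ≤ x := by
  induction l with
  | nil => simp
  | cons a l ih =>
    simp only [List.map_cons, List.sum_cons] at h
    have h1 : a ≤ |a| := le_abs_self a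
    have h2 : l.sum ≤ (l.map (fun x => |x|)).sum :=
      le_trans (le_abs_self _) (list_abs_sum_le l)
    have ha : a = |a| := by omega
    have hl : l.sum = (l.map (fun x => |x|)).sum := by omega
    intro x hx
    rcases List.mem_cons.1 hx with rfl | hx
    · rw [ha]; exact abs_nonneg _
    · exact ih hl x hx

lemma forall2_eq_map {κ : ℕ} {b : List (ZMod κ)} {ν : List ℤ}
    (h : List.Forall₂ (fun (bi : ZMod κ) (νi : ℤ) => bi = -(νi : ZMod κ)) b ν) :
    b = ν.map fun νi => -((νi : ℤ) : ZMod κ) := by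
  induction h with
  | nil => rfl
  | cons h _ ih => simp [ih, h]

lemma sum_map_neg_cast {κ : ℕ} (ν : List ℤ) :
    (ν.map fun x => -((x : ℤ) : ZMod κ)).sum = -((ν.sum : ℤ) : ZMod κ) := by
  induction ν with
  | nil => simp
  | cons a l ih => simp [ih]; push_cast; ring

lemma list_length_le_sum (l : List ℕ) (h : ∀ x ∈ l, 0 < x) : l.length ≤ l.sum := by
  induction l with
  | nil => simp
  | cons a l ih =>
    simp only [List.length_cons, List.sum_cons]
    have := h a (by simp)
    have := ih (fun x hx => h x (List.mem_cons_of_mem _ hx))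
    omega


/-- B_κ : lists of nonzero residues modulo κ summing to 0 in ℤ/κ whose entries
are congruent to -νᵢ for some integer list ν with Σ|νᵢ| = κ. -/
def Bset (κ : ℕ) : Set (List (ZMod κ)) :=
  {b | (∀ x ∈ b, x ≠ 0) ∧ b.sum = 0 ∧
    ∃ ν : List ℤ, (ν.map (fun x => |x|)).sum = (κ : ℤ) ∧
      List.Forall₂ (fun (bi : ZMod κ) (νi : ℤ) => bi = -(νi : ZMod κ)) b ν}

def Cset (κ : ℕ) : Set (List ℕ) := {l | (∀ x ∈ l, 0 < x) ∧ l.sum = κ ∧ 2 ≤ l.length}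

def fmap (κ : ℕ) (l : List ℕ) : List (ZMod κ) := l.map fun n : ℕ => -((n : ℕ) : ZMod κ)
def gmap (κ : ℕ) (l : List ℕ) : List (ZMod κ) := l.map fun n : ℕ => ((n : ℕ) : ZMod κ)


lemma mem_Cset_lt {κ : ℕ} {l : List ℕ} (hl : l ∈ Cset κ) : ∀ x ∈ l, x < κ := by
  obtain ⟨hpos, hsum, hlen⟩ := hl
  intro x hx
  obtain ⟨s, t, rfl⟩ := List.append_of_mem hx
  have hs : s.length ≤ s.sum := list_length_le_sum s (fun y hy => hpos y (by simp [hy]))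
  have ht : t.length ≤ t.sum := list_length_le_sum t (fun y hy => hpos y (by simp [hy]))
  simp only [List.sum_append, List.sum_cons] at hsum
  simp only [List.length_append, List.length_cons] at hlen
  omega

lemma natCast_ne_zero_of {κ x : ℕ} (h0 : 0 < x) (h1 : x < κ) : (x : ZMod κ) ≠ 0 := by
  rw [Ne, ZMod.natCast_eq_zero_iff]
  intro h
  exact absurd (Nat.le_of_dvd h0 h) (by omega)

lemma sum_fmap (κ : ℕ) (l : List ℕ) : (fmap κ l).sum = -((l.sum : ℕ) : ZMod κ) := by
  induction l with
  | nil => simp [fmap]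
  | cons a t ih =>
    rw [fmap, List.map_cons, List.sum_cons, ← fmap, ih, List.sum_cons]
    push_cast; ring

lemma sum_gmap (κ : ℕ) (l : List ℕ) : (gmap κ l).sum = ((l.sum : ℕ) : ZMod κ) := by
  induction l with
  | nil => simp [gmap]
  | cons a t ih =>
    rw [gmap, List.map_cons, List.sum_cons, ← gmap, ih, List.sum_cons]
    push_cast; ring

lemma abs_sum_map_natCast (l : List ℕ) :
    ((l.map fun n : ℕ => (n : ℤ)).map (fun x => |x|)).sum = (l.sum : ℤ) := by
  induction l with
  | nil => simp
  | cons a t ih =>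
    rw [List.map_cons, List.map_cons, List.sum_cons, ih, List.sum_cons]
    rw [abs_of_nonneg (Int.natCast_nonneg a)]
    push_cast; ring

lemma abs_sum_map_negCast (l : List ℕ) :
    ((l.map fun n : ℕ => -(n : ℤ)).map (fun x => |x|)).sum = (l.sum : ℤ) := by
  induction l with
  | nil => simp
  | cons a t ih =>
    rw [List.map_cons, List.map_cons, List.sum_cons, ih, List.sum_cons]
    rw [abs_neg, abs_of_nonneg (Int.natCast_nonneg a)]
    push_cast; ring

lemma forall2_fmap (κ : ℕ) (l : List ℕ) :
    List.Forall₂ (fun (bi : ZMod κ) (νi : ℤ) => bi = -(νi : ZMod κ))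
      (fmap κ l) (l.map fun n : ℕ => (n : ℤ)) := by
  induction l with
  | nil => exact List.Forall₂.nil
  | cons a t ih =>
    refine List.Forall₂.cons ?_ ih
    push_cast; ring

lemma forall2_gmap (κ : ℕ) (l : List ℕ) :
    List.Forall₂ (fun (bi : ZMod κ) (νi : ℤ) => bi = -(νi : ZMod κ))
      (gmap κ l) (l.map fun n : ℕ => -(n : ℤ)) := by
  induction l with
  | nil => exact List.Forall₂.nil
  | cons a t ih =>
    refine List.Forall₂.cons ?_ ih
    push_cast; ring

lemma fmap_mem_Bset {κ : ℕ} {l : List ℕ} (hl : l ∈ Cset κ) : fmap κ l ∈ Bset κ := by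
  refine ⟨?_, ?_, l.map (fun n : ℕ => ((n : ℕ) : ℤ)), ?_, forall2_fmap κ l⟩
  · intro x hx
    rw [fmap, List.mem_map] at hx
    obtain ⟨n, hn, rfl⟩ := hx
    exact neg_ne_zero.2 (natCast_ne_zero_of (hl.1 n hn) (mem_Cset_lt hl n hn))
  · rw [sum_fmap, hl.2.1, ZMod.natCast_self, neg_zero]
  · rw [abs_sum_map_natCast, hl.2.1]

lemma gmap_mem_Bset {κ : ℕ} {l : List ℕ} (hl : l ∈ Cset κ) : gmap κ l ∈ Bset κ := by
  refine ⟨?_, ?_, l.map (fun n : ℕ => -((n : ℕ) : ℤ)), ?_, forall2_gmap κ l⟩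
  · intro x hx
    rw [gmap, List.mem_map] at hx
    obtain ⟨n, hn, rfl⟩ := hx
    exact natCast_ne_zero_of (hl.1 n hn) (mem_Cset_lt hl n hn)
  · rw [sum_gmap, hl.2.1, ZMod.natCast_self]
  · rw [abs_sum_map_negCast, hl.2.1]

lemma fmap_def (κ : ℕ) (l : List ℕ) : fmap κ l = l.map fun n : ℕ => -((n : ℕ) : ZMod κ) := rfl
lemma gmap_def (κ : ℕ) (l : List ℕ) : gmap κ l = l.map fun n : ℕ => ((n : ℕ) : ZMod κ) := rfl
lemma Cset_def (κ : ℕ) (l : List ℕ) :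
    l ∈ Cset κ ↔ (∀ x ∈ l, 0 < x) ∧ l.sum = κ ∧ 2 ≤ l.length := Iff.rfl



lemma toNat_cast_sum (l : List ℤ) (h : ∀ x ∈ l, 0 ≤ x) :
    (((l.map Int.toNat).sum : ℕ) : ℤ) = l.sum := by
  induction l with
  | nil => simp
  | cons a t ih =>
    rw [List.map_cons, List.sum_cons, List.sum_cons, Nat.cast_add,
      ih (fun x hx => h x (List.mem_cons_of_mem _ hx)),
      Int.toNat_of_nonneg (h a List.mem_cons_self)]

lemma map_toNat_cast (κ : ℕ) (l : List ℤ) (h : ∀ x ∈ l, 0 ≤ x) :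
    (l.map Int.toNat).map (fun n : ℕ => ((n : ℕ) : ZMod κ))
      = l.map (fun x : ℤ => ((x : ℤ) : ZMod κ)) := by
  rw [List.map_map]
  refine List.map_congr_left (fun x hx => ?_)
  have hx' := Int.toNat_of_nonneg (h x hx)
  calc ((x.toNat : ℕ) : ZMod κ) = ((x.toNat : ℤ) : ZMod κ) := (Int.cast_natCast _).symm
    _ = ((x : ℤ) : ZMod κ) := by rw [hx']

lemma sum_map_neg (l : List ℤ) : (l.map (fun x : ℤ => -x)).sum = -l.sum := by
  induction l with
  | nil => simp
  | cons a t ih => rw [List.map_cons, List.sum_cons, List.sum_cons, ih]; ring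

-- main positive-case helper
lemma pos_case {κ : ℕ} (hκ : 0 < κ) (ν : List ℤ) (hnn : ∀ x ∈ ν, 0 ≤ x)
    (hnd : ∀ x ∈ ν, ¬ ((κ : ℤ) ∣ x)) (hsum : ν.sum = (κ : ℤ)) :
    ν.map Int.toNat ∈ Cset κ ∧
      ν.map (fun x : ℤ => ((x : ℤ) : ZMod κ)) = gmap κ (ν.map Int.toNat) := by
  constructor
  · rw [Cset_def]
    refine ⟨?_, ?_, ?_⟩
    · intro x hx
      rw [List.mem_map] at hx
      obtain ⟨y, hy, rfl⟩ := hx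
      have h0 := hnn y hy
      have h1 : y ≠ 0 := fun h => hnd y hy (h ▸ dvd_zero _)
      omega
    · have := toNat_cast_sum ν hnn
      rw [hsum] at this
      exact_mod_cast this
    · rw [List.length_map]
      rcases ν with _ | ⟨x, _ | ⟨y, t⟩⟩
      · simp at hsum; omega
      · refine absurd ?_ (hnd x List.mem_cons_self)
        simp only [List.sum_cons, List.sum_nil, add_zero] at hsum
        exact hsum ▸ dvd_refl _
      · simp only [List.length_cons]
        omega
  · rw [gmap_def, map_toNat_cast κ ν hnn]

lemma Bset_subset (u : ℕ) :
    Bset (2 * u + 1) ⊆ fmap (2 * u + 1) '' Cset (2 * u + 1)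
      ∪ gmap (2 * u + 1) '' Cset (2 * u + 1) := by
  set κ := 2 * u + 1 with hκdef
  have hκ : 0 < κ := by omega
  rintro b ⟨hne, hsum0, ν, habs, hf⟩
  have hb : b = ν.map fun x : ℤ => -((x : ℤ) : ZMod κ) := forall2_eq_map hf
  have hnd : ∀ x ∈ ν, ¬ ((κ : ℤ) ∣ x) := by
    intro x hx hdvd
    have hmem : -((x : ℤ) : ZMod κ) ∈ b := hb ▸ List.mem_map.2 ⟨x, hx, rfl⟩
    have hx0 : ((x : ℤ) : ZMod κ) = 0 := (ZMod.intCast_zmod_eq_zero_iff_dvd x κ).2 hdvd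
    exact hne _ hmem (by rw [hx0, neg_zero])
  have hdvd : (κ : ℤ) ∣ ν.sum := by
    rw [← ZMod.intCast_zmod_eq_zero_iff_dvd]
    have := hb ▸ hsum0
    rw [sum_map_neg_cast] at this
    exact neg_eq_zero.1 this
  have hle : |ν.sum| ≤ (κ : ℤ) := habs ▸ list_abs_sum_le ν
  have hpar : (ν.map (fun x => |x|)).sum % 2 = ν.sum % 2 := list_abs_sum_parity ν
  rw [habs] at hpar
  have hcases : ν.sum = (κ : ℤ) ∨ ν.sum = -(κ : ℤ) := by
    obtain ⟨c, hc⟩ := hdvd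
    have hκZ : (κ : ℤ) = 2 * u + 1 := by push_cast [hκdef]; ring
    rcases lt_trichotomy c 0 with h | h | h
    · right
      have : c = -1 := by nlinarith [abs_le.1 hle]
      rw [hc, this]; ring
    · exfalso; rw [hc, h, mul_zero] at hpar; omega
    · left
      have : c = 1 := by nlinarith [abs_le.1 hle]
      rw [hc, this]; ring
  rcases hcases with hs | hs
  · left
    have hnn : ∀ x ∈ ν, 0 ≤ x := all_nonneg_of_sum_eq_abs ν (by rw [hs, habs])
    obtain ⟨hC, hg⟩ := pos_case hκ ν hnn hnd hs
    refine ⟨ν.map Int.toNat, hC, ?_⟩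
    rw [fmap_def, hb, List.map_map]
    refine List.map_congr_left (fun x hx => ?_)
    show -((x.toNat : ℕ) : ZMod κ) = -((x : ℤ) : ZMod κ)
    rw [← Int.cast_natCast, Int.toNat_of_nonneg (hnn x hx)]
  · right
    have hsum_neg := sum_map_neg ν
    have habs_neg : ((ν.map (fun x : ℤ => -x)).map (fun x => |x|)).sum
        = (ν.map (fun x => |x|)).sum := by
      rw [List.map_map]
      congr 1
      exact List.map_congr_left fun x _ => abs_neg x
    set μ := ν.map (fun x : ℤ => -x) with hμ
    have hμsum : μ.sum = (κ : ℤ) := by rw [hsum_neg, hs]; ring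
    have hμnn : ∀ x ∈ μ, 0 ≤ x :=
      all_nonneg_of_sum_eq_abs μ (by rw [hμsum, habs_neg, habs])
    have hμnd : ∀ x ∈ μ, ¬ ((κ : ℤ) ∣ x) := by
      intro x hx
      rw [hμ, List.mem_map] at hx
      obtain ⟨y, hy, rfl⟩ := hx
      rw [dvd_neg]
      exact hnd y hy
    obtain ⟨hC, hg⟩ := pos_case hκ μ hμnn hμnd hμsum
    refine ⟨μ.map Int.toNat, hC, ?_⟩
    rw [← hg, hb, hμ, List.map_map]
    refine List.map_congr_left (fun x hx => ?_)
    show ((-x : ℤ) : ZMod κ) = -((x : ℤ) : ZMod κ)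
    exact Int.cast_neg x


lemma Cset_eq_image (κ : ℕ) :
    Cset κ = Composition.blocks '' {c : Composition κ | 2 ≤ c.blocks.length} := by
  ext l
  constructor
  · rintro ⟨h1, h2, h3⟩
    exact ⟨⟨l, fun {i} hi => h1 i hi, h2⟩, h3, rfl⟩
  · rintro ⟨c, hc, rfl⟩
    exact ⟨fun x hx => c.blocks_pos hx, c.blocks_sum, hc⟩

lemma blocks_injective (κ : ℕ) : Function.Injective (Composition.blocks (n := κ)) := by
  intro c d h
  cases c; cases d; simpa using h

lemma Cset_finite (κ : ℕ) : (Cset κ).Finite := by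
  rw [Cset_eq_image]
  exact (Set.toFinite _).image _

lemma ncard_Cset (κ : ℕ) (hκ : 0 < κ) : (Cset κ).ncard = 2 ^ (κ - 1) - 1 := by
  rw [Cset_eq_image, Set.ncard_image_of_injective _ (blocks_injective κ)]
  have hset : {c : Composition κ | 2 ≤ c.blocks.length} = {Composition.single κ hκ}ᶜ := by
    ext c
    simp only [Set.mem_setOf_eq, Set.mem_compl_iff, Set.mem_singleton_iff]
    rw [Composition.eq_single_iff_length]
    have hne : c.blocks.length ≠ 0 := by
      intro h
      have := c.blocks_sum
      rw [List.length_eq_zero_iff.1 h] at this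
      simp at this
      omega
    show 2 ≤ c.blocks.length ↔ ¬ c.length = 1
    unfold Composition.length
    omega
  rw [hset]
  have h1 := Set.ncard_add_ncard_compl ({Composition.single κ hκ} : Set (Composition κ))
  rw [Set.ncard_singleton, Nat.card_eq_fintype_card, composition_card] at h1
  omega

lemma cast_nat_inj {κ a b : ℕ} (ha : a < κ) (hb : b < κ) (h : (a : ZMod κ) = b) : a = b := by
  have := congrArg ZMod.val h
  rwa [ZMod.val_cast_of_lt ha, ZMod.val_cast_of_lt hb] at this

lemma map_injOn_aux {κ : ℕ} (f : ℕ → ZMod κ)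
    (hf : ∀ a b, a < κ → b < κ → f a = f b → a = b) :
    ∀ l l' : List ℕ, (∀ x ∈ l, x < κ) → (∀ x ∈ l', x < κ) →
      l.map f = l'.map f → l = l' := by
  intro l
  induction l with
  | nil =>
    intro l' _ _ h
    cases l' with
    | nil => rfl
    | cons a t => simp at h
  | cons a t ih =>
    intro l' hl hl' h
    cases l' with
    | nil => simp at h
    | cons a' t' =>
      simp only [List.map_cons, List.cons.injEq] at h
      have ha : a = a' := hf a a' (hl a (by simp)) (hl' a' (by simp)) h.1
      have ht : t = t' := ih t' (fun x hx => hl x (by simp [hx]))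
        (fun x hx => hl' x (by simp [hx])) h.2
      rw [ha, ht]

lemma fmap_injOn (κ : ℕ) : Set.InjOn (fmap κ) (Cset κ) := by
  intro l hl l' hl' h
  exact map_injOn_aux _ (fun a b ha hb hab =>
      cast_nat_inj ha hb (neg_injective hab)) l l'
    (mem_Cset_lt hl) (mem_Cset_lt hl') h

lemma gmap_injOn (κ : ℕ) : Set.InjOn (gmap κ) (Cset κ) := by
  intro l hl l' hl' h
  exact map_injOn_aux _ (fun a b ha hb hab => cast_nat_inj ha hb hab) l l'
    (mem_Cset_lt hl) (mem_Cset_lt hl') h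


def Eset (κ : ℕ) : Set (List (ZMod κ)) :=
  (fun a : ℕ => [((a : ℕ) : ZMod κ), -((a : ℕ) : ZMod κ)]) '' (Set.Ioo 0 κ)

lemma fg_forall2 {κ : ℕ} (hκ : 0 < κ) :
    ∀ l l' : List ℕ, (∀ x ∈ l, x < κ) → (∀ x ∈ l', 0 < x ∧ x < κ) →
      fmap κ l = gmap κ l' → List.Forall₂ (fun a a' => a + a' = κ) l l' := by
  intro l
  induction l with
  | nil =>
    intro l' _ _ h
    cases l' with
    | nil => exact List.Forall₂.nil
    | cons a t => simp [fmap, gmap] at h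
  | cons a t ih =>
    intro l' hl hl' h
    cases l' with
    | nil => simp [fmap, gmap] at h
    | cons a' t' =>
      simp only [fmap, gmap, List.map_cons, List.cons.injEq] at h
      refine List.Forall₂.cons ?_ (ih t' (fun x hx => hl x (by simp [hx]))
        (fun x hx => hl' x (by simp [hx])) h.2)
      have hcast : ((a + a' : ℕ) : ZMod κ) = 0 := by
        rw [Nat.cast_add]
        rw [← h.1]
        ring
      have hdvd := (ZMod.natCast_eq_zero_iff _ _).1 hcast
      obtain ⟨c, hc⟩ := hdvd
      have h1 : a < κ := hl a (by simp)
      have h2 : 0 < a' ∧ a' < κ := hl' a' (by simp)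
      rcases Nat.lt_or_ge c 2 with hcl | hcl
      · interval_cases c <;> omega
      · nlinarith
lemma forall2_sum {κ : ℕ} {l l' : List ℕ}
    (h : List.Forall₂ (fun a a' => a + a' = κ) l l') :
    l.sum + l'.sum = l.length * κ := by
  induction h with
  | nil => simp
  | cons hr _ ih =>
    simp only [List.sum_cons, List.length_cons]
    rw [Nat.succ_mul]
    omega

lemma inter_eq (κ : ℕ) (hκ : 0 < κ) :
    fmap κ '' Cset κ ∩ gmap κ '' Cset κ = Eset κ := by
  ext b
  constructor
  · rintro ⟨⟨l, hl, rfl⟩, l', hl', heq⟩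
    have hF := fg_forall2 hκ l l' (mem_Cset_lt hl)
      (fun x hx => ⟨hl'.1 x hx, mem_Cset_lt hl' x hx⟩) heq.symm
    have hsum := forall2_sum hF
    rw [hl.2.1, hl'.2.1] at hsum
    have hlen2 : l.length = 2 := by
      have h2 : l.length * κ = 2 * κ := by omega
      exact Nat.eq_of_mul_eq_mul_right hκ h2
    obtain ⟨c, d, rfl⟩ := List.length_eq_two.1 hlen2
    obtain ⟨a, b', hab⟩ := List.length_eq_two.1 (hF.length_eq ▸ hlen2)
    subst hab
    have hc : c + a = κ := by
      have := List.forall₂_cons.1 hF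
      exact this.1
    have hd : d + b' = κ := by
      have := (List.forall₂_cons.1 (List.forall₂_cons.1 hF).2).1
      exact this
    have hsum_l : c + d = κ := by
      have := hl.2.1
      simpa using this
    have ha1 : 0 < a := hl'.1 a (by simp)
    have ha2 : a < κ := mem_Cset_lt hl' a (by simp)
    refine ⟨a, ⟨ha1, ha2⟩, ?_⟩
    have hb' : b' = κ - a := by omega
    rw [← heq]
    show _ = gmap κ [a, b']
    rw [hb']
    simp only [gmap, List.map_cons, List.map_nil]
    congr 2
    rw [Nat.cast_sub (le_of_lt ha2), ZMod.natCast_self, zero_sub]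
  · rintro ⟨a, ⟨ha1, ha2⟩, rfl⟩
    have hcast : ((κ - a : ℕ) : ZMod κ) = -((a : ℕ) : ZMod κ) := by
      rw [Nat.cast_sub (le_of_lt ha2), ZMod.natCast_self, zero_sub]
    constructor
    · refine ⟨[κ - a, a], ⟨?_, ?_, by simp⟩, ?_⟩
      · intro x hx
        simp only [List.mem_cons, List.not_mem_nil, or_false] at hx
        rcases hx with h | h <;> omega
      · simp only [List.sum_cons, List.sum_nil]
        omega
      · simp only [fmap, List.map_cons, List.map_nil, hcast, neg_neg]
    · refine ⟨[a, κ - a], ⟨?_, ?_, by simp⟩, ?_⟩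
      · intro x hx
        simp only [List.mem_cons, List.not_mem_nil, or_false] at hx
        rcases hx with h | h <;> omega
      · simp only [List.sum_cons, List.sum_nil]
        omega
      · simp only [gmap, List.map_cons, List.map_nil, hcast]

lemma ncard_Eset (κ : ℕ) (hκ : 0 < κ) : (Eset κ).ncard = κ - 1 := by
  have hinj : Set.InjOn (fun a : ℕ => [((a : ℕ) : ZMod κ), -((a : ℕ) : ZMod κ)])
      (Set.Ioo 0 κ) := by
    intro a ha b hb h
    simp only [List.cons.injEq] at h
    exact cast_nat_inj ha.2 hb.2 h.1
  rw [Eset, Set.ncard_image_of_injOn hinj, ← Finset.coe_Ioo, Set.ncard_coe_finset,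
    Nat.card_Ioo]
  omega

lemma Eset_finite (κ : ℕ) : (Eset κ).Finite := by
  refine Set.Finite.image _ ?_
  rw [← Finset.coe_Ioo]
  exact (Finset.Ioo 0 κ).finite_toSet
/-- For odd level κ = 2u+1, |B_κ| + 1 = 2^{2u+1} - 2u - 1. -/

theorem card_Bset_odd (u : ℕ) :
    Set.ncard (Bset (2 * u + 1)) + 1 = 2 ^ (2 * u + 1) - 2 * u - 1 := by
  set κ := 2 * u + 1 with hκdef
  have hκ : 0 < κ := by omega
  have hBeq : Bset κ = fmap κ '' Cset κ ∪ gmap κ '' Cset κ := by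
    refine Set.Subset.antisymm (Bset_subset u) (Set.union_subset ?_ ?_)
    · rintro b ⟨l, hl, rfl⟩; exact fmap_mem_Bset hl
    · rintro b ⟨l, hl, rfl⟩; exact gmap_mem_Bset hl
  have hCfin := Cset_finite κ
  have hunion := Set.ncard_union_add_ncard_inter (fmap κ '' Cset κ) (gmap κ '' Cset κ)
    (hCfin.image _) (hCfin.image _)
  rw [inter_eq κ hκ, ncard_Eset κ hκ,
    Set.ncard_image_of_injOn (fmap_injOn κ), Set.ncard_image_of_injOn (gmap_injOn κ),
    ncard_Cset κ hκ, ← hBeq] at hunion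
  have hp : κ < 2 ^ κ := Nat.lt_two_pow_self
  have hpow : 2 ^ κ = 2 ^ (κ - 1) * 2 := by
    rw [← pow_succ, Nat.sub_add_cancel hκ]
  have h1 : 1 ≤ 2 ^ (κ - 1) := Nat.one_le_two_pow
  omega
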